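/- Let H₀ = diag(a₁,…,a_n) be strongly regular (the differences ω_{kℓ} = a_ℓ − a_k for k < ℓ are nonzero and pairwise distinct in absolute value) and let H₁ be Hermitian with all off-diagonal entries b_{kℓ} ≠ 0. Then the iterated commutators B_m = ad_{−iH₀}^m(−iH₁) for m = 1,…,n²−n span the full (n²−n)-dimensional space of matrices in su(n) with zero diagonal. -/

import Mathlib

open Matrix

open Matrix Polynomial

namespace Stmt6Aux

variable {n : ℕ}

abbrev Pn (n : ℕ) := {p : Fin n × Fin n // p.1 < p.2}

def pairEquiv : Bool × Pn n ≃ {p : Fin n × Fin n // p.1 ≠ p.2} where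
  toFun x := if x.1 then ⟨x.2.1, ne_of_lt x.2.2⟩ else ⟨(x.2.1.2, x.2.1.1), ne_of_gt x.2.2⟩
  invFun q := if h : q.1.1 < q.1.2 then (true, ⟨q.1, h⟩)
    else (false, ⟨(q.1.2, q.1.1), lt_of_le_of_ne (not_lt.mp h) q.2.symm⟩)
  left_inv x := by
    obtain ⟨b, ⟨⟨k, l⟩, hkl⟩⟩ := x
    cases b <;> simp [hkl, asymm hkl, not_lt.mpr (le_of_lt hkl)]
  right_inv q := by
    obtain ⟨⟨k, l⟩, hkl⟩ := q
    rcases lt_or_gt_of_ne hkl with h | h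
    · simp [h]
    · simp [h, asymm h]

lemma two_mul_card_Pn : 2 * Fintype.card (Pn n) = n ^ 2 - n := by
  have h1 : Fintype.card {p : Fin n × Fin n // p.1 ≠ p.2} = n ^ 2 - n := by
    have hd : Fintype.card {p : Fin n × Fin n // p.1 = p.2} = n := by
      rw [Fintype.card_congr (⟨fun x => x.1.1, fun a => ⟨(a, a), rfl⟩,
        fun x => Subtype.ext (by obtain ⟨⟨k, l⟩, h⟩ := x; cases h; rfl), fun a => rfl⟩ :
        {p : Fin n × Fin n // p.1 = p.2} ≃ Fin n)]
      simp
    have := Fintype.card_subtype_compl (fun p : Fin n × Fin n => p.1 = p.2)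
    rw [this, hd]
    simp [sq]
  rw [← h1, ← Fintype.card_congr (pairEquiv (n := n))]
  simp [Fintype.card_prod, two_mul]

noncomputable def T (n : ℕ) : Submodule ℝ (Matrix (Fin n) (Fin n) ℂ) where
  carrier := {X | Xᴴ = -X ∧ ∀ i, X i i = 0}
  add_mem' := by
    rintro X Y ⟨hX, hX'⟩ ⟨hY, hY'⟩
    refine ⟨by rw [conjTranspose_add, hX, hY, neg_add], fun i => by
      simp [Matrix.add_apply, hX' i, hY' i]⟩
  zero_mem' := ⟨by simp, fun i => rfl⟩
  smul_mem' := by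
    rintro c X ⟨hX, hX'⟩
    constructor
    · ext k l
      have := congrFun (congrFun hX k) l
      simp only [conjTranspose_apply, Matrix.neg_apply] at this ⊢
      simp only [Matrix.smul_apply, star_smul, star_trivial, this, smul_neg]
    · intro i; simp [Matrix.smul_apply, hX' i]

noncomputable def mk (f : Pn n → ℂ) : Matrix (Fin n) (Fin n) ℂ := fun k l =>
  if h : k < l then f ⟨(k, l), h⟩
  else if h' : l < k then -(starRingEnd ℂ) (f ⟨(l, k), h'⟩) else 0

lemma mk_mem (f : Pn n → ℂ) : mk f ∈ T n := by
  constructor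
  · ext k l
    simp only [conjTranspose_apply, Matrix.neg_apply, mk]
    rcases lt_trichotomy k l with h | h | h
    · simp [h, asymm h]
    · subst h; simp [lt_irrefl]
    · simp [h, asymm h]
  · intro i; simp [mk]

noncomputable def e : T n ≃ₗ[ℝ] (Pn n → ℂ) where
  toFun X p := X.1 p.1.1 p.1.2
  map_add' X Y := rfl
  map_smul' c X := rfl
  invFun f := ⟨mk f, mk_mem f⟩
  left_inv := by
    rintro ⟨X, hX, hX'⟩
    apply Subtype.ext
    ext k l
    show mk (fun p => X p.1.1 p.1.2) k l = X k l
    rcases lt_trichotomy k l with h | h | h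
    · rw [mk, dif_pos h]
    · subst h; rw [mk, dif_neg (lt_irrefl k), dif_neg (lt_irrefl k), (hX' k).symm]
    · rw [mk, dif_neg (asymm h), dif_pos h]
      have := congrFun (congrFun hX k) l
      simp only [conjTranspose_apply, Matrix.neg_apply] at this
      show -(starRingEnd ℂ) (X l k) = X k l
      rw [show (starRingEnd ℂ) (X l k) = star (X l k) from rfl, this, neg_neg]
  right_inv f := by
    funext p
    show mk f p.1.1 p.1.2 = f p
    rw [mk, dif_pos p.2]

lemma finrank_T : Module.finrank ℝ (T n) = n ^ 2 - n := by
  rw [(e (n := n)).finrank_eq, Module.finrank_pi_fintype,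
    ← two_mul_card_Pn (n := n)]
  simp [Complex.finrank_real_complex, Finset.sum_const, mul_comm]

variable (a : Fin n → ℝ) (H₁ : Matrix (Fin n) (Fin n) ℂ)

noncomputable def adj (Y : Matrix (Fin n) (Fin n) ℂ) : Matrix (Fin n) (Fin n) ℂ :=
  (-Complex.I • Matrix.diagonal (fun k => (a k : ℂ))) * Y -
    Y * (-Complex.I • Matrix.diagonal (fun k => (a k : ℂ)))

lemma adj_apply (Y : Matrix (Fin n) (Fin n) ℂ) (k l : Fin n) :
    adj a Y k l = (-Complex.I * ((a k : ℂ) - (a l : ℂ))) * Y k l := by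
  simp only [adj, Matrix.sub_apply, Matrix.smul_mul, Matrix.mul_smul,
    Matrix.smul_apply, Matrix.diagonal_mul, Matrix.mul_diagonal, smul_eq_mul]
  ring

lemma B_apply (m : ℕ) (k l : Fin n) :
    (adj a)^[m] (-Complex.I • H₁) k l
      = (-Complex.I * ((a k : ℂ) - (a l : ℂ))) ^ m * (-Complex.I * H₁ k l) := by
  induction m with
  | zero => simp [Matrix.smul_apply]
  | succ m ih =>
    rw [Function.iterate_succ_apply', adj_apply, ih, pow_succ]
    ring

lemma B_mem (hH₁ : H₁.IsHermitian) {m : ℕ} (hm : 1 ≤ m) :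
    (adj a)^[m] (-Complex.I • H₁) ∈ T n := by
  constructor
  · ext k l
    have hstar : star (H₁ l k) = H₁ k l := by
      have := congrFun (congrFun hH₁.eq k) l
      simpa [conjTranspose_apply] using this
    simp only [conjTranspose_apply, Matrix.neg_apply, B_apply, star_mul', star_pow,
      star_neg, Complex.star_def, _root_.map_mul, map_sub, map_neg, Complex.conj_I,
      Complex.conj_ofReal]
    rw [show ((starRingEnd ℂ) (H₁ l k) : ℂ) = star (H₁ l k) from rfl, hstar]
    ring
  · intro i
    rw [B_apply, sub_self, mul_zero, zero_pow (by omega : m ≠ 0), zero_mul]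

/-- The frequency of a pair. -/
noncomputable def lam (p : Pn n) : ℂ := Complex.I * ((a p.1.2 - a p.1.1 : ℝ) : ℂ)

/-- The root family: `0` together with `± lam p`. -/
noncomputable def F : Option (Bool × Pn n) → ℂ :=
  fun o => o.elim 0 (fun x => if x.1 then lam a x.2 else -lam a x.2)

variable {a}

lemma lam_ne_zero (hnz : ∀ k l : Fin n, k < l → a l - a k ≠ 0) (p : Pn n) :
    lam a p ≠ 0 :=
  mul_ne_zero Complex.I_ne_zero (by exact_mod_cast hnz p.1.1 p.1.2 p.2)

lemma pair_eq_of_abs (hreg : ∀ k l p q : Fin n, k < l → p < q → (k, l) ≠ (p, q) →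
      |a l - a k| ≠ |a q - a p|) {p q : Pn n}
    (h : |a p.1.2 - a p.1.1| = |a q.1.2 - a q.1.1|) : p = q := by
  by_contra hne
  exact hreg p.1.1 p.1.2 q.1.1 q.1.2 p.2 q.2
    (fun hc => hne (Subtype.ext (by
      obtain ⟨⟨k, l⟩, _⟩ := p; obtain ⟨⟨k', l'⟩, _⟩ := q
      simpa using hc))) h

lemma I_mul_cancel {x y : ℝ} (h : Complex.I * (x : ℂ) = Complex.I * (y : ℂ)) :
    x = y := by
  exact_mod_cast mul_left_cancel₀ Complex.I_ne_zero h

lemma F_inj (hnz : ∀ k l : Fin n, k < l → a l - a k ≠ 0)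
    (hreg : ∀ k l p q : Fin n, k < l → p < q → (k, l) ≠ (p, q) →
      |a l - a k| ≠ |a q - a p|) : Function.Injective (F a) := by
  have hneg : ∀ p : Pn n, -lam a p = Complex.I * ((-(a p.1.2 - a p.1.1) : ℝ) : ℂ) := by
    intro p; rw [lam]; push_cast; ring
  have hcontra : ∀ p q : Pn n, a p.1.2 - a p.1.1 = -(a q.1.2 - a q.1.1) → False := by
    intro p q h
    have hpq : p = q := pair_eq_of_abs hreg (abs_eq_abs.mpr (Or.inr h))
    subst hpq
    have := hnz p.1.1 p.1.2 p.2
    apply this; linarith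
  have hval : ∀ (b b' : Bool) (p q : Pn n), (if b then lam a p else -lam a p) =
      (if b' then lam a q else -lam a q) → (b, p) = (b', q) := by
    intro b b' p q h
    cases b <;> cases b' <;>
      simp only [if_true, if_false, Bool.false_eq_true, reduceIte] at h
    · have h1 := I_mul_cancel (x := a p.1.2 - a p.1.1) (y := a q.1.2 - a q.1.1)
        (neg_injective h)
      have hpq : p = q := pair_eq_of_abs hreg (by rw [h1])
      rw [hpq]
    · have h' : Complex.I * ((-(a p.1.2 - a p.1.1) : ℝ) : ℂ)
          = Complex.I * ((a q.1.2 - a q.1.1 : ℝ) : ℂ) := by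
        rw [← hneg p, h]; simp only [lam]
      exact (hcontra p q (by linarith [I_mul_cancel h'])).elim
    · have h' : Complex.I * ((a p.1.2 - a p.1.1 : ℝ) : ℂ)
          = Complex.I * ((-(a q.1.2 - a q.1.1) : ℝ) : ℂ) := by
        rw [← hneg q, ← h]; simp only [lam]
      exact (hcontra p q (by linarith [I_mul_cancel h'])).elim
    · have h1 := I_mul_cancel (x := a p.1.2 - a p.1.1) (y := a q.1.2 - a q.1.1) h
      have hpq : p = q := pair_eq_of_abs hreg (by rw [h1])
      rw [hpq]
  rintro (_ | ⟨b, p⟩) (_ | ⟨b', q⟩) h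
  · rfl
  · exact absurd h.symm (by
      simp only [F, Option.elim]
      split <;> simp [lam_ne_zero hnz])
  · exact absurd h (by
      simp only [F, Option.elim]
      split <;> simp [lam_ne_zero hnz])
  · simp only [F, Option.elim] at h
    exact congrArg some (hval b b' p q h)

variable {H₁}

lemma indep (hnz : ∀ k l : Fin n, k < l → a l - a k ≠ 0)
    (hreg : ∀ k l p q : Fin n, k < l → p < q → (k, l) ≠ (p, q) →
      |a l - a k| ≠ |a q - a p|)
    (hconn : ∀ k l : Fin n, k ≠ l → H₁ k l ≠ 0) :
    LinearIndependent ℝ (fun m : (Set.Icc 1 (n ^ 2 - n) : Set ℕ) =>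
      (adj a)^[(m : ℕ)] (-Complex.I • H₁)) := by
  rw [Fintype.linearIndependent_iff]
  intro g hg
  set q : Polynomial ℂ := ∑ m : (Set.Icc 1 (n ^ 2 - n) : Set ℕ),
    C ((g m : ℝ) : ℂ) * X ^ (m : ℕ) with hq
  have key : ∀ (k l : Fin n), k ≠ l →
      q.eval (-Complex.I * ((a k : ℂ) - (a l : ℂ))) = 0 := by
    intro k l hklne
    have h1 : ∑ m : (Set.Icc 1 (n ^ 2 - n) : Set ℕ), ((g m : ℝ) : ℂ) *
        ((-Complex.I * ((a k : ℂ) - (a l : ℂ))) ^ (m : ℕ) * (-Complex.I * H₁ k l))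
        = 0 := by
      have h0 := congrFun (congrFun hg k) l
      simpa only [Matrix.sum_apply, Matrix.smul_apply, Matrix.zero_apply,
        B_apply, Complex.real_smul] using h0
    have h2 : (∑ m : (Set.Icc 1 (n ^ 2 - n) : Set ℕ), ((g m : ℝ) : ℂ) *
        (-Complex.I * ((a k : ℂ) - (a l : ℂ))) ^ (m : ℕ)) * (-Complex.I * H₁ k l)
        = 0 := by
      rw [Finset.sum_mul, ← h1]
      exact Finset.sum_congr rfl (fun m _ => by ring)
    have hc : (-Complex.I * H₁ k l) ≠ 0 :=
      mul_ne_zero (neg_ne_zero.mpr Complex.I_ne_zero) (hconn k l hklne)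
    have h3 := (mul_eq_zero.mp h2).resolve_right hc
    rw [hq, eval_finset_sum]
    simpa [eval_mul, eval_pow, eval_C, eval_X] using h3
  have heval : ∀ o, q.eval (F a o) = 0 := by
    rintro (_ | ⟨b, p⟩)
    · show q.eval 0 = 0
      rw [hq, eval_finset_sum]
      refine Finset.sum_eq_zero (fun m _ => ?_)
      rw [eval_mul, eval_pow, eval_X, zero_pow (by have := m.2.1; omega), mul_zero]
    · cases b
      · have hF : F a (some (false, p)) = -Complex.I * ((a p.1.2 : ℂ) - (a p.1.1 : ℂ)) := by
          simp only [F, Option.elim, Bool.false_eq_true, if_false, lam]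
          push_cast; ring
        rw [hF]; exact key p.1.2 p.1.1 (ne_of_gt p.2)
      · have hF : F a (some (true, p)) = -Complex.I * ((a p.1.1 : ℂ) - (a p.1.2 : ℂ)) := by
          simp only [F, Option.elim, if_true, lam]
          push_cast; ring
        rw [hF]; exact key p.1.1 p.1.2 (ne_of_lt p.2)
  have hq0 : q = 0 := by
    refine eq_zero_of_natDegree_lt_card_of_eval_eq_zero q (F_inj hnz hreg) heval ?_
    have hdeg : q.natDegree ≤ n ^ 2 - n :=
      natDegree_sum_le_of_forall_le _ _
        (fun m _ => le_trans (natDegree_C_mul_X_pow_le _ _) m.2.2)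
    have hcard := two_mul_card_Pn (n := n)
    rw [Fintype.card_option, Fintype.card_prod, Fintype.card_bool]
    omega
  intro m
  have h := congrArg (fun r => coeff r (m : ℕ)) hq0
  simp only [hq, finset_sum_coeff, coeff_C_mul, coeff_X_pow, coeff_zero] at h
  rw [Finset.sum_eq_single m (fun b _ hb => by
      rw [if_neg (fun hc => hb (Subtype.ext hc.symm)), mul_zero])
    (fun hm => absurd (Finset.mem_univ m) hm), if_pos rfl, mul_one] at h
  exact_mod_cast h

lemma main (hnz : ∀ k l : Fin n, k < l → a l - a k ≠ 0)
    (hreg : ∀ k l p q : Fin n, k < l → p < q → (k, l) ≠ (p, q) →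
      |a l - a k| ≠ |a q - a p|)
    (hH₁ : H₁.IsHermitian)
    (hconn : ∀ k l : Fin n, k ≠ l → H₁ k l ≠ 0) :
    Submodule.span ℝ
        ((fun m => (adj a)^[m] (-Complex.I • H₁)) '' Set.Icc 1 (n ^ 2 - n))
      = Submodule.span ℝ
          {X : Matrix (Fin n) (Fin n) ℂ | Xᴴ = -X ∧ ∀ i, X i i = 0} := by
  have hTset : {X : Matrix (Fin n) (Fin n) ℂ | Xᴴ = -X ∧ ∀ i, X i i = 0}
      = (T n : Set _) := rfl
  rw [hTset, Submodule.span_eq]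
  haveI : FiniteDimensional ℝ (T n) :=
    LinearEquiv.finiteDimensional (e (n := n)).symm
  apply Submodule.eq_of_le_of_finrank_le
  · rw [Submodule.span_le]
    rintro X ⟨m, hm, rfl⟩
    exact B_mem a H₁ hH₁ hm.1
  · have hcard : Fintype.card (Set.Icc 1 (n ^ 2 - n) : Set ℕ) = n ^ 2 - n := by
      rw [← Set.toFinset_card, Set.toFinset_Icc, Nat.card_Icc]
      omega
    rw [finrank_T, Set.image_eq_range,
      finrank_span_eq_card (indep hnz hreg hconn), hcard]

end Stmt6Aux


theorem stmt_6 {n : ℕ} (a : Fin n → ℝ)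
    (hnz : ∀ k l : Fin n, k < l → a l - a k ≠ 0)
    (hreg : ∀ k l p q : Fin n, k < l → p < q → (k, l) ≠ (p, q) →
      |a l - a k| ≠ |a q - a p|)
    (H₁ : Matrix (Fin n) (Fin n) ℂ) (hH₁ : H₁.IsHermitian)
    (hconn : ∀ k l : Fin n, k ≠ l → H₁ k l ≠ 0) :
    let H₀ : Matrix (Fin n) (Fin n) ℂ := Matrix.diagonal (fun k => (a k : ℂ))
    let ad : Matrix (Fin n) (Fin n) ℂ → Matrix (Fin n) (Fin n) ℂ :=
      fun Y => (-Complex.I • H₀) * Y - Y * (-Complex.I • H₀)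
    let B : ℕ → Matrix (Fin n) (Fin n) ℂ := fun m => ad^[m] (-Complex.I • H₁)
    Submodule.span ℝ (B '' (Set.Icc 1 (n ^ 2 - n)))
      = Submodule.span ℝ
          {X : Matrix (Fin n) (Fin n) ℂ | Xᴴ = -X ∧ ∀ i, X i i = 0} := by
  intro H₀ ad B
  exact Stmt6Aux.main hnz hreg hH₁ hconn
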